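/- Let r_2 : [0,1] → [0,1] be monotone nondecreasing and concave with r_2(1) = 1, and let m ∈ [0,1]. Then E_{y ~ U([0,1])}[r_2(y) | r_2(y) ≥ m] ≥ (1+m)/2. -/

import Mathlib

open MeasureTheory Set

lemma integral_linear' (A B a b : ℝ) :
    ∫ y in a..b, (A * y + B) = A * (b^2 - a^2)/2 + B * (b - a) := by
  rw [intervalIntegral.integral_add ((by fun_prop : Continuous fun y : ℝ => A * y).intervalIntegrable _ _)
      (intervalIntegrable_const), intervalIntegral.integral_const_mul, integral_id,
      intervalIntegral.integral_const]
  simp [smul_eq_mul]; ring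

/-- conditional expectation of a monotone concave r₂ with r₂(1)=1,
given {r₂(y) ≥ m}, is at least (1+m)/2. -/
theorem cond_exp_ge (r₂ : ℝ → ℝ)
    (hmono : MonotoneOn r₂ (Set.Icc (0:ℝ) 1))
    (hconc : ConcaveOn ℝ (Set.Icc (0:ℝ) 1) r₂)
    (hrange : ∀ x ∈ Set.Icc (0:ℝ) 1, r₂ x ∈ Set.Icc (0:ℝ) 1)
    (hr1 : r₂ 1 = 1)
    (m : ℝ) (hm : m ∈ Set.Icc (0:ℝ) 1)
    (μ : Measure ℝ) (hμ : μ = volume.restrict (Set.Icc (0:ℝ) 1))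
    (hpos : μ {y | m ≤ r₂ y} ≠ 0) :
    (∫ y, r₂ y ∂(ProbabilityTheory.cond μ {y | m ≤ r₂ y})) ≥ (1 + m)/2 := by
  set A : Set ℝ := {y | m ≤ r₂ y} with hA
  set S : Set ℝ := A ∩ Icc 0 1 with hS
  have h1S : (1:ℝ) ∈ S := ⟨by simp [hA, hr1, hm.2], by norm_num⟩
  have hSsub : S ⊆ Icc 0 1 := inter_subset_right
  set c : ℝ := sInf S with hc
  have hbdd : BddBelow S := ⟨0, fun x hx => (hSsub hx).1⟩
  have hc0 : 0 ≤ c := le_csInf ⟨1, h1S⟩ (fun x hx => (hSsub hx).1)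
  have hc1 : c ≤ 1 := csInf_le hbdd h1S
  have hIocS : Ioc c 1 ⊆ S := by
    rintro z ⟨hz1, hz2⟩
    obtain ⟨y', hy'S, hy'z⟩ := exists_lt_of_csInf_lt ⟨1, h1S⟩ hz1
    refine ⟨?_, (hSsub hy'S).1.trans hy'z.le, hz2⟩
    exact le_trans hy'S.1 (hmono (hSsub hy'S) ⟨(hSsub hy'S).1.trans hy'z.le, hz2⟩ hy'z.le)
  have hSIcc : S ⊆ Icc c 1 := fun y hy => ⟨csInf_le hbdd hy, (hSsub hy).2⟩
  have hvol : ∀ B : Set ℝ, volume (B ∩ S) = volume (B ∩ Ioc c 1) := by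
    intro B
    apply le_antisymm
    · calc volume (B ∩ S) ≤ volume ((B ∩ Ioc c 1) ∪ {c}) := by
            apply measure_mono; rintro x ⟨hxB, hxS⟩
            rcases eq_or_lt_of_le (hSIcc hxS).1 with h | h
            · exact Or.inr (by simp [← h])
            · exact Or.inl ⟨hxB, h, (hSIcc hxS).2⟩
          _ ≤ volume (B ∩ Ioc c 1) + volume ({c} : Set ℝ) := measure_union_le _ _
          _ = volume (B ∩ Ioc c 1) := by simp
    · exact measure_mono (fun x hx => ⟨hx.1, hIocS hx.2⟩)
  have hμA : μ A = ENNReal.ofReal (1 - c) := by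
    rw [hμ, Measure.restrict_apply' measurableSet_Icc]
    have := hvol univ
    simpa [hS, Real.volume_Ioc] using this
  have hclt1 : c < 1 := by
    rcases lt_or_ge c 1 with h | h
    · exact h
    · exfalso; apply hpos; rw [hμA]; simp [sub_nonpos.mpr h]
  have hrestr : μ.restrict A = volume.restrict (Ioc c 1) := by
    ext B hB
    rw [Measure.restrict_apply hB, hμ, Measure.restrict_apply' measurableSet_Icc,
      Measure.restrict_apply hB, inter_assoc]
    exact hvol B
  have hInt : IntegrableOn r₂ (Icc 0 1) := hmono.integrableOn_isCompact isCompact_Icc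
  have hIntc : ∀ a b : ℝ, 0 ≤ a → b ≤ 1 → IntegrableOn r₂ (Ioc a b) := fun a b ha hb =>
    hInt.mono_set (fun x hx => ⟨le_trans ha hx.1.le, le_trans hx.2 hb⟩)
  -- chord bound
  have chord : ∀ y' ∈ S, y' < 1 → ∀ y ∈ Icc y' 1,
      m + ((1 - m)/(1 - y')) * y + (- ((1 - m)/(1 - y')) * y') ≤ r₂ y := by
    intro y' hy'S hy'1 y hy
    have hy'01 : y' ∈ Icc (0:ℝ) 1 := hSsub hy'S
    have hd : (0:ℝ) < 1 - y' := by linarith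
    have ha : 0 ≤ (1 - y) / (1 - y') := div_nonneg (by linarith [hy.2]) hd.le
    have hb : 0 ≤ (y - y') / (1 - y') := div_nonneg (by linarith [hy.1]) hd.le
    have hab : (1 - y) / (1 - y') + (y - y') / (1 - y') = 1 := by field_simp; ring
    have hcomb : ((1 - y) / (1 - y')) • y' + ((y - y') / (1 - y')) • (1:ℝ) = y := by
      rw [smul_eq_mul, smul_eq_mul]; field_simp; ring
    have hcc := hconc.2 hy'01 (by norm_num : (1:ℝ) ∈ Icc (0:ℝ) 1) ha hb hab
    rw [hcomb, smul_eq_mul, smul_eq_mul, hr1] at hcc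
    have hmy' : m ≤ r₂ y' := hy'S.1
    have h2 : ((1 - y) / (1 - y')) * m + (y - y') / (1 - y') ≤ r₂ y := by
      nlinarith
    have heq : ((1 - y) / (1 - y')) * m + (y - y') / (1 - y')
        = m + ((1 - m)/(1 - y')) * y + (- ((1 - m)/(1 - y')) * y') := by
      field_simp; ring
    linarith
  -- key integral bound
  have key : (1 - c) * ((1 + m) / 2) ≤ ∫ y in Ioc c 1, r₂ y := by
    refine le_of_forall_pos_le_add ?_
    intro ε hε
    set y' : ℝ := c + min ε ((1 - c)/2) with hy'def
    have hmin : 0 < min ε ((1 - c)/2) := lt_min hε (by linarith)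
    have hcy' : c < y' := by simp only [hy'def]; linarith
    have hy'le : y' ≤ 1 := by
      have : min ε ((1 - c)/2) ≤ (1 - c)/2 := min_le_right _ _
      simp only [hy'def]; linarith
    have hy'lt1 : y' < 1 := by
      have : min ε ((1 - c)/2) ≤ (1 - c)/2 := min_le_right _ _
      simp only [hy'def]; linarith
    have hy'S : y' ∈ S := hIocS ⟨hcy', hy'le⟩
    have hy'0 : 0 ≤ y' := le_trans hc0 hcy'.le
    -- split integral
    have hsplit : ∫ y in Ioc c 1, r₂ y
        = (∫ y in Ioc c y', r₂ y) + ∫ y in Ioc y' 1, r₂ y := by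
      rw [← setIntegral_union (Ioc_disjoint_Ioc_of_le le_rfl) measurableSet_Ioc
        (hIntc c y' hc0 hy'le) (hIntc y' 1 hy'0 le_rfl), Ioc_union_Ioc_eq_Ioc hcy'.le hy'le]
    have h1 : 0 ≤ ∫ y in Ioc c y', r₂ y := by
      refine setIntegral_nonneg measurableSet_Ioc (fun x hx => ?_)
      exact (hrange x ⟨le_trans hc0 hx.1.le, le_trans hx.2 hy'le⟩).1
    have h2 : (1 - y') * ((1 + m)/2) ≤ ∫ y in Ioc y' 1, r₂ y := by
      have hle : ∫ y in Ioc y' 1, (m + ((1 - m)/(1 - y')) * y + (- ((1 - m)/(1 - y')) * y'))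
          ≤ ∫ y in Ioc y' 1, r₂ y := by
        refine setIntegral_mono_on ((by fun_prop :
          Continuous fun y : ℝ => m + ((1 - m)/(1 - y')) * y + (- ((1 - m)/(1 - y')) * y')).integrableOn_Ioc)
          (hIntc y' 1 hy'0 le_rfl) measurableSet_Ioc (fun x hx => ?_)
        exact chord y' hy'S hy'lt1 x ⟨hx.1.le, hx.2⟩
      have hcalc : ∫ y in Ioc y' 1, (m + ((1 - m)/(1 - y')) * y + (- ((1 - m)/(1 - y')) * y'))
          = (1 - y') * ((1 + m)/2) := by
        rw [← intervalIntegral.integral_of_le hy'le]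
        have : ∀ y : ℝ, m + ((1 - m)/(1 - y')) * y + (- ((1 - m)/(1 - y')) * y')
            = ((1 - m)/(1 - y')) * y + (m - ((1 - m)/(1 - y')) * y') := fun y => by ring
        simp_rw [this]
        rw [integral_linear']
        have h : (1:ℝ) - y' ≠ 0 := by linarith
        field_simp
        ring
      linarith
    have hbound : (1 - y') * ((1 + m)/2) ≥ (1 - c) * ((1 + m)/2) - ε := by
      have h3 : y' - c ≤ ε := by
        simp only [hy'def]; simpa using min_le_left ε ((1 - c)/2)
      have h4 : (1 + m)/2 ≤ 1 := by linarith [hm.2]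
      have h5 : 0 ≤ (1 + m)/2 := by linarith [hm.1]
      nlinarith [mul_le_mul h3 h4 h5 hε.le]
    linarith [hsplit, h1, h2, hbound]
  -- conclude
  rw [ProbabilityTheory.cond, hrestr, hμA, integral_smul_measure]
  have htoReal : ((ENNReal.ofReal (1 - c))⁻¹).toReal = (1 - c)⁻¹ := by
    rw [ENNReal.toReal_inv, ENNReal.toReal_ofReal (by linarith)]
  rw [htoReal, smul_eq_mul, inv_mul_eq_div, ge_iff_le, le_div_iff₀ (by linarith : (0:ℝ) < 1 - c)]
  nlinarith [key]
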